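/- For n ≥ 3 and 1 ≤ a ≤ ⌊n/2⌋, the counts of Kostant involutions satisfy the recursion ki_n^a = ki_{n−1}^a + ki_{n−2}^{a−1}, where ki_m^b denotes the number of Kostant involutions in S_m whose cycle decomposition contains exactly b transpositions (i.e., exactly 2b non-fixed points). -/

import Mathlib

/-- The special involution `σ_{i,j}` of `S_n`: the permutation of `{1,…,n}` that swaps
`k` and `k+j+1` for every `k` with `i-j ≤ k ≤ i` (these transpositions are pairwise
disjoint, hence commute) and fixes all other points. -/
def sigmaPerm (i j : ℕ) : Equiv.Perm ℕ :=
  ((List.range (j + 1)).map (fun t => Equiv.swap (i - j + t) (i + t + 1))).prod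

/-- The parameter constraints `1 ≤ i ≤ n-1` and `0 ≤ j ≤ min(i-1, n-1-i)` for a special
involution `σ_{i,j}` of `S_n`. -/
def SpecialParams (n i j : ℕ) : Prop :=
  1 ≤ i ∧ i ≤ n - 1 ∧ j ≤ min (i - 1) (n - 1 - i)

/-- The extended support `{i-j-1, i-j, …, i+j+2}` of `σ_{i,j}`. -/
def extSupport (i j : ℕ) : Finset ℕ := Finset.Icc (i - j - 1) (i + j + 2)

/-- Two special involutions (given by their parameters) are distant if their extended
supports have at most one common element. -/
def Distant (p q : ℕ × ℕ) : Prop :=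
  (extSupport p.1 p.2 ∩ extSupport q.1 q.2).card ≤ 1

/-- A Kostant involution in `S_n`: a product of pairwise distant special involutions
(the identity being the empty product). -/
def IsKostant (n : ℕ) (w : Equiv.Perm ℕ) : Prop :=
  ∃ L : List (ℕ × ℕ),
    (∀ p ∈ L, SpecialParams n p.1 p.2) ∧
    L.Pairwise Distant ∧
    w = (L.map (fun p => sigmaPerm p.1 p.2)).prod

/-- `ki n a` is the number of Kostant involutions in `S_n` whose cycle decomposition
contains exactly `a` transpositions, i.e. with exactly `2a` non-fixed points. -/
noncomputable def ki (n a : ℕ) : ℕ :=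
  Set.ncard {w : Equiv.Perm ℕ | IsKostant n w ∧ Set.ncard {k : ℕ | w k ≠ k} = 2 * a}

lemma swap_list_apply (i j : ℕ) (hij : j + 1 ≤ i) : ∀ (m : ℕ), m ≤ j + 1 → ∀ (k : ℕ),
    ((List.range m).map (fun t => Equiv.swap (i - j + t) (i + t + 1))).prod k =
      if i - j ≤ k ∧ k < i - j + m then k + (j + 1)
      else if i + 1 ≤ k ∧ k ≤ i + m then k - (j + 1) else k := by
  intro m
  induction m with
  | zero =>
    intro _ k
    simp only [List.range_zero, List.map_nil, List.prod_nil, Equiv.Perm.one_apply]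
    split_ifs <;> omega
  | succ m ih =>
    intro hm k
    rw [List.range_succ, List.map_append, List.prod_append]
    simp only [List.map_cons, List.map_nil, List.prod_cons, List.prod_nil, mul_one]
    rw [Equiv.Perm.mul_apply]
    rcases eq_or_ne k (i - j + m) with rfl | h1
    · rw [Equiv.swap_apply_left, ih (by omega)]
      split_ifs <;> omega
    rcases eq_or_ne k (i + m + 1) with rfl | h2
    · rw [Equiv.swap_apply_right, ih (by omega)]
      split_ifs <;> omega
    · rw [Equiv.swap_apply_of_ne_of_ne h1 h2, ih (by omega)]
      split_ifs <;> omega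

lemma sigmaPerm_apply (i j : ℕ) (hij : j + 1 ≤ i) (k : ℕ) :
    sigmaPerm i j k = if i - j ≤ k ∧ k ≤ i then k + (j + 1)
      else if i + 1 ≤ k ∧ k ≤ i + j + 1 then k - (j + 1) else k := by
  rw [sigmaPerm, swap_list_apply i j hij (j+1) le_rfl k]
  split_ifs <;> omega

lemma sigmaPerm_invol (i j : ℕ) (hij : j + 1 ≤ i) : sigmaPerm i j * sigmaPerm i j = 1 := by
  ext k
  simp only [Equiv.Perm.mul_apply, sigmaPerm_apply i j hij, Equiv.Perm.one_apply]
  split_ifs <;> omega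

lemma sigmaPerm_fixed (i j : ℕ) (hij : j + 1 ≤ i) (k : ℕ) (h : k < i - j ∨ i + j + 1 < k) :
    sigmaPerm i j k = k := by
  rw [sigmaPerm_apply i j hij]; split_ifs <;> omega

lemma sigmaPerm_moves {i j k : ℕ} (hij : j + 1 ≤ i) (h : sigmaPerm i j k ≠ k) :
    i - j ≤ k ∧ k ≤ i + j + 1 := by
  by_contra hc
  exact h (sigmaPerm_fixed i j hij k (by omega))

lemma supp_sigmaPerm (i j : ℕ) (hij : j + 1 ≤ i) :
    {k | sigmaPerm i j k ≠ k} = Set.Icc (i - j) (i + j + 1) := by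
  ext k
  simp only [Set.mem_setOf_eq, Set.mem_Icc, sigmaPerm_apply i j hij]
  split_ifs <;> omega

lemma distant_arith {p q : ℕ × ℕ} :
    Distant p q ↔
      min (p.1 + p.2 + 2) (q.1 + q.2 + 2) + 1 - max (p.1 - p.2 - 1) (q.1 - q.2 - 1) ≤ 1 := by
  unfold Distant extSupport
  rw [show Finset.Icc (p.1 - p.2 - 1) (p.1 + p.2 + 2) ∩ Finset.Icc (q.1 - q.2 - 1) (q.1 + q.2 + 2) =
      Finset.Icc (max (p.1 - p.2 - 1) (q.1 - q.2 - 1)) (min (p.1 + p.2 + 2) (q.1 + q.2 + 2)) from by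
    ext x; simp only [Finset.mem_inter, Finset.mem_Icc]; omega, Nat.card_Icc]

lemma distant_symm {p q : ℕ × ℕ} (h : Distant p q) : Distant q p := by
  unfold Distant at *
  rwa [Finset.inter_comm]

lemma sp_arith {n i j : ℕ} (h : SpecialParams n i j) : j + 1 ≤ i ∧ i + j + 1 ≤ n ∧ 1 ≤ i := by
  obtain ⟨h1, h2, h3⟩ := h; omega

lemma sp_mono {n m i j : ℕ} (hnm : n ≤ m) (h : SpecialParams n i j) : SpecialParams m i j := by
  obtain ⟨h1, h2, h3⟩ := h; refine ⟨h1, by omega, by omega⟩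

lemma distant_disjoint {n : ℕ} {p q : ℕ × ℕ} (hp : SpecialParams n p.1 p.2)
    (hq : SpecialParams n q.1 q.2) (h : Distant p q) :
    Equiv.Perm.Disjoint (sigmaPerm p.1 p.2) (sigmaPerm q.1 q.2) := by
  intro k
  have hp' := sp_arith hp
  have hq' := sp_arith hq
  have := distant_arith.mp h
  rw [sigmaPerm_apply _ _ hp'.1, sigmaPerm_apply _ _ hq'.1]
  split_ifs <;> omega

lemma prod_fixed {l : List (Equiv.Perm ℕ)} {k : ℕ} (h : ∀ σ ∈ l, σ k = k) : l.prod k = k := by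
  induction l with
  | nil => rfl
  | cons a l ih =>
    rw [List.prod_cons, Equiv.Perm.mul_apply, ih (fun σ hσ => h σ (List.mem_cons_of_mem _ hσ)),
      h a (List.mem_cons_self)]

lemma prod_apply_mem {l : List (Equiv.Perm ℕ)} (hl : l.Pairwise Equiv.Perm.Disjoint) {σ : Equiv.Perm ℕ}
    (hσ : σ ∈ l) {k : ℕ} (hk : σ k ≠ k) : l.prod k = σ k := by
  induction l with
  | nil => cases hσ
  | cons a l ih =>
    rw [List.prod_cons, Equiv.Perm.mul_apply]
    obtain ⟨hd, hl'⟩ := List.pairwise_cons.mp hl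
    rcases List.mem_cons.mp hσ with rfl | h
    · rw [prod_fixed fun τ hτ => ((hd τ hτ) k).resolve_left hk]
    · rw [ih hl' h]
      rcases hd σ h (σ k) with h2 | h2
      · exact h2
      · exact absurd (σ.injective h2) hk

lemma prod_moves {l : List (Equiv.Perm ℕ)} (hl : l.Pairwise Equiv.Perm.Disjoint) {k : ℕ}
    (h : l.prod k ≠ k) : ∃ σ ∈ l, σ k ≠ k := by
  by_contra hc
  push_neg at hc
  exact h (prod_fixed hc)

lemma pairwise_disjoint_map {n : ℕ} {L : List (ℕ × ℕ)}
    (hP : ∀ p ∈ L, SpecialParams n p.1 p.2) (hd : L.Pairwise Distant) :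
    (L.map fun p => sigmaPerm p.1 p.2).Pairwise Equiv.Perm.Disjoint := by
  rw [List.pairwise_map]
  exact hd.imp_of_mem fun {a b} ha hb h => distant_disjoint (hP a ha) (hP b hb) h

lemma exists_split {L : List (ℕ × ℕ)} {p : ℕ × ℕ} (hp : p ∈ L) :
    ∃ L' : List (ℕ × ℕ), List.Perm L (p :: L') := by
  obtain ⟨s, t, rfl⟩ := List.append_of_mem hp
  exact ⟨s ++ t, List.perm_middle⟩

lemma perm_pairwise {L L' : List (ℕ × ℕ)} (hperm : List.Perm L L') (hd : L.Pairwise Distant) :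
    L'.Pairwise Distant :=
  (hperm.pairwise_iff fun {_ _} h => distant_symm h).mp hd

lemma prod_mul_cancel {n : ℕ} {L L' : List (ℕ × ℕ)} {p : ℕ × ℕ} (hperm : List.Perm L (p :: L'))
    (hP : ∀ q ∈ L, SpecialParams n q.1 q.2) (hd : L.Pairwise Distant) :
    ((L.map fun q => sigmaPerm q.1 q.2).prod) * sigmaPerm p.1 p.2 =
      (L'.map fun q => sigmaPerm q.1 q.2).prod := by
  have hpw : (p :: L').Pairwise Distant := perm_pairwise hperm hd
  have hP' : ∀ q ∈ p :: L', SpecialParams n q.1 q.2 :=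
    fun q hq => hP q (hperm.symm.subset hq)
  have hdisj := pairwise_disjoint_map hP' hpw
  have hcomm : ((p :: L').map fun q => sigmaPerm q.1 q.2).Pairwise Commute :=
    hdisj.imp fun h => h.commute
  have hcommL : (L.map fun q => sigmaPerm q.1 q.2).Pairwise Commute :=
    (pairwise_disjoint_map hP hd).imp fun h => h.commute
  have h1 : (L.map fun q => sigmaPerm q.1 q.2).prod =
      ((p :: L').map fun q => sigmaPerm q.1 q.2).prod :=
    (hperm.map fun q => sigmaPerm q.1 q.2).prod_eq' hcommL
  rw [h1, List.map_cons, List.prod_cons]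
  have hc : Commute (sigmaPerm p.1 p.2) (L'.map fun q => sigmaPerm q.1 q.2).prod := by
    apply Commute.list_prod_right
    intro x hx
    exact (List.pairwise_cons.mp hcomm).1 x hx
  rw [hc.eq, mul_assoc,
    sigmaPerm_invol p.1 p.2 (sp_arith (hP p (hperm.symm.subset (List.mem_cons_self)))).1,
    mul_one]

lemma supp_prod_subset {n : ℕ} {L : List (ℕ × ℕ)}
    (hP : ∀ p ∈ L, SpecialParams n p.1 p.2) (hd : L.Pairwise Distant) :
    {k | (L.map fun p => sigmaPerm p.1 p.2).prod k ≠ k} ⊆ Set.Icc 1 n := by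
  intro k hk
  obtain ⟨σ, hσ, hσk⟩ := prod_moves (pairwise_disjoint_map hP hd) hk
  obtain ⟨q, hq, rfl⟩ := List.mem_map.mp hσ
  have h1 := sp_arith (hP q hq)
  have h2 := sigmaPerm_moves h1.1 hσk
  exact Set.mem_Icc.mpr ⟨by omega, by omega⟩

lemma ncard_supp {n : ℕ} (L : List (ℕ × ℕ))
    (hP : ∀ p ∈ L, SpecialParams n p.1 p.2) (hd : L.Pairwise Distant) :
    {k | (L.map fun p => sigmaPerm p.1 p.2).prod k ≠ k}.ncard
      = (L.map fun p => 2 * (p.2 + 1)).sum := by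
  induction L with
  | nil => simp
  | cons p L ih =>
    obtain ⟨hdh, hdt⟩ := List.pairwise_cons.mp hd
    have hPt : ∀ q ∈ L, SpecialParams n q.1 q.2 := fun q hq => hP q (List.mem_cons_of_mem _ hq)
    have hPh := sp_arith (hP p (List.mem_cons_self))
    have hdisj := pairwise_disjoint_map hP hd
    have hdisjt := pairwise_disjoint_map hPt hdt
    have hsupp_eq : {k | ((p :: L).map fun q => sigmaPerm q.1 q.2).prod k ≠ k}
        = {k | sigmaPerm p.1 p.2 k ≠ k} ∪ {k | (L.map fun q => sigmaPerm q.1 q.2).prod k ≠ k} := by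
      ext k
      simp only [Set.mem_setOf_eq, Set.mem_union]
      constructor
      · intro h
        obtain ⟨σ, hσ, hσk⟩ := prod_moves hdisj h
        rw [List.map_cons] at hσ
        rcases List.mem_cons.mp hσ with h' | h'
        · left; rwa [h'] at hσk
        · right; rw [prod_apply_mem hdisjt h' hσk]; exact hσk
      · intro h
        rcases h with h | h
        · rw [prod_apply_mem hdisj (by rw [List.map_cons]; exact List.mem_cons_self) h]
          exact h
        · obtain ⟨σ, hσ, hσk⟩ := prod_moves hdisjt h
          rw [prod_apply_mem hdisj (by rw [List.map_cons]; exact List.mem_cons_of_mem _ hσ) hσk]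
          exact hσk
    rw [hsupp_eq]
    have hdisjoint : Disjoint {k | sigmaPerm p.1 p.2 k ≠ k}
        {k | (L.map fun q => sigmaPerm q.1 q.2).prod k ≠ k} := by
      rw [Set.disjoint_left]
      intro k h1 h2
      obtain ⟨σ, hσ, hσk⟩ := prod_moves hdisjt h2
      obtain ⟨q, hq, rfl⟩ := List.mem_map.mp hσ
      rcases distant_disjoint (hP p (List.mem_cons_self)) (hPt q hq) (hdh q hq) k with h3 | h3
      · exact h1 h3
      · exact hσk h3
    have hfin1 : {k | sigmaPerm p.1 p.2 k ≠ k}.Finite := by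
      rw [supp_sigmaPerm p.1 p.2 hPh.1]; exact Set.finite_Icc _ _
    have hfin2 : {k | (L.map fun q => sigmaPerm q.1 q.2).prod k ≠ k}.Finite :=
      Set.Finite.subset (Set.finite_Icc 1 n) (supp_prod_subset hPt hdt)
    rw [Set.ncard_union_eq hdisjoint hfin1 hfin2, ih hPt hdt, List.map_cons, List.sum_cons]
    congr 1
    rw [supp_sigmaPerm p.1 p.2 hPh.1, ← Finset.coe_Icc, Set.ncard_coe_finset, Nat.card_Icc]
    omega

lemma finite_small_supp (n : ℕ) :
    {w : Equiv.Perm ℕ | ∀ k, w k ≠ k → k ∈ Set.Icc 1 n}.Finite := by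
  have hs : (Set.Icc 1 n).Finite := Set.finite_Icc _ _
  haveI := hs.to_subtype
  set F : Equiv.Perm ℕ → (↥(Set.Icc 1 n) → ℕ) := fun w x => w x.1 with hF
  have himg : (F '' {w : Equiv.Perm ℕ | ∀ k, w k ≠ k → k ∈ Set.Icc 1 n}).Finite := by
    apply Set.Finite.subset (Set.Finite.pi (fun _ : ↥(Set.Icc 1 n) => hs))
    rintro g ⟨w, hw, rfl⟩
    rw [Set.mem_pi]
    intro x _
    simp only [hF]
    rcases eq_or_ne (w x.1) x.1 with h | h
    · rw [h]; exact x.2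
    · rcases eq_or_ne (w (w x.1)) (w x.1) with h2 | h2
      · exact absurd (w.injective h2) h
      · exact hw _ h2
  apply Set.Finite.of_finite_image himg
  · intro w1 h1 w2 h2 heq
    simp only [hF] at heq
    ext k
    rcases em (k ∈ Set.Icc 1 n) with hk | hk
    · exact congrFun heq ⟨k, hk⟩
    · rcases eq_or_ne (w1 k) k with e1 | e1
      · rcases eq_or_ne (w2 k) k with e2 | e2
        · rw [e1, e2]
        · exact absurd (h2 k e2) hk
      · exact absurd (h1 k e1) hk

lemma kostant_supp {n : ℕ} {w : Equiv.Perm ℕ} (h : IsKostant n w) :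
    ∀ k, w k ≠ k → k ∈ Set.Icc 1 n := by
  obtain ⟨L, hP, hd, rfl⟩ := h
  exact fun k hk => supp_prod_subset hP hd hk

lemma isKostant_pred_iff {n : ℕ} (hn : 3 ≤ n) (w : Equiv.Perm ℕ) :
    IsKostant (n - 1) w ↔ IsKostant n w ∧ w n = n := by
  constructor
  · intro h
    constructor
    · obtain ⟨L, hP, hd, rfl⟩ := h
      exact ⟨L, fun p hp => sp_mono (by omega) (hP p hp), hd, rfl⟩
    · by_contra hc
      have := kostant_supp h n hc
      rw [Set.mem_Icc] at this
      omega
  · rintro ⟨⟨L, hP, hd, rfl⟩, hfix⟩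
    refine ⟨L, fun p hp => ?_, hd, rfl⟩
    have hsp := hP p hp
    have ha := sp_arith hsp
    by_cases hcon : p.1 + p.2 + 1 ≤ n - 1
    · obtain ⟨s1, s2, s3⟩ := hsp
      exact ⟨s1, by omega, by omega⟩
    · exfalso
      have he : p.1 + p.2 + 1 = n := by omega
      have hm : sigmaPerm p.1 p.2 n = n - (p.2 + 1) := by
        rw [sigmaPerm_apply p.1 p.2 ha.1]
        split_ifs <;> omega
      have hw := prod_apply_mem (pairwise_disjoint_map hP hd)
        (List.mem_map.mpr ⟨p, hp, rfl⟩) (k := n) (by rw [hm]; omega)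
      rw [hm] at hw
      omega

def shrink (n : ℕ) (w : Equiv.Perm ℕ) : Equiv.Perm ℕ :=
  if n - 1 - w n = 0 then w * sigmaPerm (n - 1) 0
  else w * sigmaPerm (n - 1 - (n - 1 - w n)) (n - 1 - w n) *
    sigmaPerm (n - 2 - (n - 1 - w n)) (n - 1 - w n - 1)

def extendK (n : ℕ) (w : Equiv.Perm ℕ) : Equiv.Perm ℕ :=
  if w (n - 2) = n - 2 then w * sigmaPerm (n - 1) 0
  else w * sigmaPerm (n - 3 - (n - 3 - w (n - 2))) (n - 3 - w (n - 2)) *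
    sigmaPerm (n - 2 - (n - 3 - w (n - 2))) (n - 3 - w (n - 2) + 1)

lemma cancel2 {a b w : Equiv.Perm ℕ} (ha : a * a = 1) (hb : b * b = 1) :
    w * a * b * b * a = w := by
  rw [mul_assoc (w * a) b b, hb, mul_one, mul_assoc w a a, ha, mul_one]

lemma shrink_spec {n : ℕ} (hn : 3 ≤ n) {w : Equiv.Perm ℕ} (hw : IsKostant n w)
    (hwn : w n ≠ n) :
    IsKostant (n - 2) (shrink n w) ∧
    {k | shrink n w k ≠ k}.ncard + 2 = {k | w k ≠ k}.ncard ∧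
    extendK n (shrink n w) = w := by
  obtain ⟨L, hP, hd, rfl⟩ := hw
  set w := (L.map fun p => sigmaPerm p.1 p.2).prod with hwdef
  have hdisj := pairwise_disjoint_map hP hd
  obtain ⟨σ, hσ, hσn⟩ := prod_moves hdisj hwn
  obtain ⟨p, hp, rfl⟩ := List.mem_map.mp hσ
  have hap := sp_arith (hP p hp)
  have hin := sigmaPerm_moves hap.1 hσn
  have htop : p.1 + p.2 + 1 = n := by omega
  have hσval : sigmaPerm p.1 p.2 n = n - (p.2 + 1) := by
    rw [sigmaPerm_apply p.1 p.2 hap.1]; split_ifs <;> omega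
  have hwval : w n = n - (p.2 + 1) := by
    rw [prod_apply_mem hdisj hσ hσn, hσval]
  have hj : n - 1 - w n = p.2 := by omega
  obtain ⟨L', hperm⟩ := exists_split hp
  have hkey : w * sigmaPerm p.1 p.2 = (L'.map fun q => sigmaPerm q.1 q.2).prod :=
    prod_mul_cancel hperm hP hd
  have hP' : ∀ q ∈ L', SpecialParams n q.1 q.2 :=
    fun q hq => hP q (hperm.symm.subset (List.mem_cons_of_mem _ hq))
  have hpwc := perm_pairwise hperm hd
  have hd' : L'.Pairwise Distant := (List.pairwise_cons.mp hpwc).2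
  have hdistp : ∀ q ∈ L', Distant p q := (List.pairwise_cons.mp hpwc).1
  have hq2 : ∀ q ∈ L', q.1 + q.2 + 2 ≤ n - 2 * p.2 - 2 := by
    intro q hq
    have h1 := distant_arith.mp (hdistp q hq)
    have h2 := sp_arith (hP' q hq)
    omega
  have hP'' : ∀ q ∈ L', SpecialParams (n - 2) q.1 q.2 := by
    intro q hq
    have h1 := hq2 q hq
    obtain ⟨s1, s2, s3⟩ := hP' q hq
    exact ⟨s1, by omega, by omega⟩
  have hsum : (L.map fun q => 2 * (q.2 + 1)).sum
      = 2 * (p.2 + 1) + (L'.map fun q => 2 * (q.2 + 1)).sum := by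
    rw [(hperm.map fun q => 2 * (q.2 + 1)).sum_eq, List.map_cons, List.sum_cons]
  have hwcard : {k | w k ≠ k}.ncard = (L.map fun q => 2 * (q.2 + 1)).sum :=
    ncard_supp L hP hd
  rcases Nat.eq_zero_or_pos p.2 with hp2 | hp2
  · -- p.2 = 0, p = (n-1, 0)
    have hp1 : p.1 = n - 1 := by omega
    have hshr : shrink n w = (L'.map fun q => sigmaPerm q.1 q.2).prod := by
      rw [shrink, if_pos (by omega), ← hkey, hp1, hp2]
    have hK : IsKostant (n - 2) (shrink n w) := ⟨L', hP'', hd', hshr⟩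
    refine ⟨hK, ?_, ?_⟩
    · rw [hshr, ncard_supp L' hP'' hd', hwcard]
      omega
    · have hfix2 : shrink n w (n - 2) = n - 2 := by
        rw [hshr]
        apply prod_fixed
        intro τ hτ
        obtain ⟨q, hq, rfl⟩ := List.mem_map.mp hτ
        apply sigmaPerm_fixed _ _ (sp_arith (hP' q hq)).1
        have := hq2 q hq
        omega
      rw [extendK, if_pos hfix2, shrink, if_pos (by omega)]
      rw [mul_assoc, show sigmaPerm (n-1) 0 * sigmaPerm (n-1) 0 = 1 from
        sigmaPerm_invol _ _ (by omega), mul_one]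
  · -- p.2 ≥ 1
    set r : ℕ × ℕ := (p.1 - 1, p.2 - 1) with hr
    have hshr : shrink n w = ((L' ++ [r]).map fun q => sigmaPerm q.1 q.2).prod := by
      rw [List.map_append, List.prod_append, List.map_cons, List.map_nil, List.prod_cons,
        List.prod_nil, mul_one, ← hkey]
      rw [shrink, if_neg (by omega)]
      rw [show n - 1 - (n - 1 - w n) = p.1 by omega, show n - 1 - w n = p.2 by omega,
        show n - 2 - p.2 = p.1 - 1 by omega, show p.2 - 1 = r.2 from rfl]
    have hPr : SpecialParams (n - 2) r.1 r.2 := by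
      refine ⟨?_, ?_, ?_⟩ <;> simp only [hr] <;> omega
    have hP3 : ∀ q ∈ L' ++ [r], SpecialParams (n - 2) q.1 q.2 := by
      intro q hq
      rcases List.mem_append.mp hq with h | h
      · exact hP'' q h
      · rw [List.mem_singleton.mp h]; exact hPr
    have hd3 : (L' ++ [r]).Pairwise Distant := by
      rw [List.pairwise_append]
      refine ⟨hd', List.pairwise_singleton _ _, ?_⟩
      intro q hq r' hr'
      rw [List.mem_singleton.mp hr']
      have h1 := hq2 q hq
      have h2 := sp_arith (hP' q hq)
      rw [distant_arith]
      simp only [hr]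
      omega
    have hK : IsKostant (n - 2) (shrink n w) := ⟨L' ++ [r], hP3, hd3, hshr⟩
    refine ⟨hK, ?_, ?_⟩
    · rw [hshr, ncard_supp _ hP3 hd3, hwcard, hsum, List.map_append, List.sum_append]
      simp only [List.map_cons, List.map_nil, List.sum_cons, List.sum_nil, hr]
      omega
    · have hrmove : sigmaPerm r.1 r.2 (n - 2) = n - 2 - p.2 := by
        rw [sigmaPerm_apply r.1 r.2 (by simp only [hr]; omega)]
        simp only [hr]
        split_ifs <;> omega
      have hval : shrink n w (n - 2) = n - 2 - p.2 := by
        rw [hshr, prod_apply_mem (pairwise_disjoint_map hP3 hd3)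
          (List.mem_map.mpr ⟨r, by simp, rfl⟩) (by rw [hrmove]; omega), hrmove]
      rw [extendK, if_neg (by rw [hval]; omega)]
      rw [show n - 3 - (n - 3 - shrink n w (n - 2)) = p.1 - 1 by rw [hval]; omega,
        show n - 3 - shrink n w (n - 2) = p.2 - 1 by rw [hval]; omega,
        show n - 2 - (p.2 - 1) = p.1 by omega, show p.2 - 1 + 1 = p.2 by omega]
      rw [shrink, if_neg (by omega),
        show n - 1 - (n - 1 - w n) = p.1 by omega, show n - 1 - w n = p.2 by omega,
        show n - 2 - p.2 = p.1 - 1 by omega]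
      exact cancel2 (sigmaPerm_invol _ _ (by omega)) (sigmaPerm_invol _ _ (by omega))

lemma extendK_spec {n : ℕ} (hn : 3 ≤ n) {w : Equiv.Perm ℕ} (hw : IsKostant (n - 2) w) :
    IsKostant n (extendK n w) ∧ (extendK n w) n ≠ n ∧
    {k | extendK n w k ≠ k}.ncard = {k | w k ≠ k}.ncard + 2 ∧
    shrink n (extendK n w) = w := by
  obtain ⟨L, hP, hd, rfl⟩ := hw
  set w := (L.map fun p => sigmaPerm p.1 p.2).prod with hwdef
  have hdisj := pairwise_disjoint_map hP hd
  have hPn : ∀ q ∈ L, SpecialParams n q.1 q.2 := fun q hq => sp_mono (by omega) (hP q hq)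
  have hbound : ∀ q ∈ L, q.1 + q.2 + 1 ≤ n - 2 := fun q hq => (sp_arith (hP q hq)).2.1
  have hfixhi : ∀ k, n - 2 < k → w k = k := by
    intro k hk
    apply prod_fixed
    intro τ hτ
    obtain ⟨q, hq, rfl⟩ := List.mem_map.mp hτ
    apply sigmaPerm_fixed _ _ (sp_arith (hP q hq)).1
    have := hbound q hq
    omega
  have hwcard : {k | w k ≠ k}.ncard = (L.map fun q => 2 * (q.2 + 1)).sum :=
    ncard_supp L hP hd
  have hswap : sigmaPerm (n - 1) 0 n = n - 1 := by
    rw [sigmaPerm_apply (n - 1) 0 (by omega)]; split_ifs <;> omega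
  rcases eq_or_ne (w (n - 2)) (n - 2) with hcase | hcase
  · -- case A: w fixes n-2 : append (n-1, 0)
    have hq3 : ∀ q ∈ L, q.1 + q.2 + 2 ≤ n - 2 := by
      intro q hq
      by_contra hcon
      have ha := sp_arith (hP q hq)
      have he : q.1 + q.2 + 1 = n - 2 := by omega
      have hm : sigmaPerm q.1 q.2 (n - 2) = n - 2 - (q.2 + 1) := by
        rw [sigmaPerm_apply q.1 q.2 ha.1]; split_ifs <;> omega
      have hv := prod_apply_mem hdisj (List.mem_map.mpr ⟨q, hq, rfl⟩)
        (k := n - 2) (by rw [hm]; omega)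
      rw [hm] at hv
      rw [show (List.map (fun p => sigmaPerm p.1 p.2) L).prod = w from rfl] at hv
      omega
    set r : ℕ × ℕ := (n - 1, 0) with hr
    have hext : extendK n w = ((L ++ [r]).map fun q => sigmaPerm q.1 q.2).prod := by
      rw [List.map_append, List.prod_append, List.map_cons, List.map_nil, List.prod_cons,
        List.prod_nil, mul_one, extendK, if_pos hcase]
    have hP3 : ∀ q ∈ L ++ [r], SpecialParams n q.1 q.2 := by
      intro q hq
      rcases List.mem_append.mp hq with h | h
      · exact hPn q h
      · rw [List.mem_singleton.mp h]
        refine ⟨?_, ?_, ?_⟩ <;> simp only [hr] <;> omega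
    have hd3 : (L ++ [r]).Pairwise Distant := by
      rw [List.pairwise_append]
      refine ⟨hd, List.pairwise_singleton _ _, ?_⟩
      intro q hq r' hr'
      rw [List.mem_singleton.mp hr']
      have h1 := hq3 q hq
      have h2 := sp_arith (hP q hq)
      rw [distant_arith]
      simp only [hr]
      omega
    have hK : IsKostant n (extendK n w) := ⟨L ++ [r], hP3, hd3, hext⟩
    have hvaln : extendK n w n = n - 1 := by
      rw [extendK, if_pos hcase, Equiv.Perm.mul_apply, hswap, hfixhi (n - 1) (by omega)]
    refine ⟨hK, by omega, ?_, ?_⟩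
    · rw [hext, ncard_supp _ hP3 hd3, hwcard, List.map_append, List.sum_append]
      simp only [List.map_cons, List.map_nil, List.sum_cons, List.sum_nil, hr]
      omega
    · rw [shrink, if_pos (by rw [hvaln]; omega), extendK, if_pos hcase, mul_assoc,
        sigmaPerm_invol _ _ (by omega), mul_one]
  · -- case B: w moves n-2
    obtain ⟨σ, hσ, hσm⟩ := prod_moves hdisj hcase
    obtain ⟨q, hq, rfl⟩ := List.mem_map.mp hσ
    have ha := sp_arith (hP q hq)
    have hin := sigmaPerm_moves ha.1 hσm
    have htop : q.1 + q.2 + 1 = n - 2 := by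
      have := hbound q hq; omega
    have hσval : sigmaPerm q.1 q.2 (n - 2) = n - 3 - q.2 := by
      rw [sigmaPerm_apply q.1 q.2 ha.1]; split_ifs <;> omega
    have hwval : w (n - 2) = n - 3 - q.2 := by
      rw [prod_apply_mem hdisj hσ hσm, hσval]
    obtain ⟨L', hperm⟩ := exists_split hq
    have hkey : w * sigmaPerm q.1 q.2 = (L'.map fun u => sigmaPerm u.1 u.2).prod :=
      prod_mul_cancel hperm hP hd
    have hP' : ∀ u ∈ L', SpecialParams (n - 2) u.1 u.2 :=
      fun u hu => hP u (hperm.symm.subset (List.mem_cons_of_mem _ hu))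
    have hpwc := perm_pairwise hperm hd
    have hd' : L'.Pairwise Distant := (List.pairwise_cons.mp hpwc).2
    have hdistq : ∀ u ∈ L', Distant q u := (List.pairwise_cons.mp hpwc).1
    have hu2 : ∀ u ∈ L', u.1 + u.2 + 2 ≤ q.1 - q.2 - 1 := by
      intro u hu
      have h1 := distant_arith.mp (hdistq u hu)
      have h2 := sp_arith (hP' u hu)
      omega
    set r : ℕ × ℕ := (q.1 + 1, q.2 + 1) with hr
    have hext : extendK n w = ((L' ++ [r]).map fun u => sigmaPerm u.1 u.2).prod := by
      rw [List.map_append, List.prod_append, List.map_cons, List.map_nil, List.prod_cons,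
        List.prod_nil, mul_one, ← hkey, extendK, if_neg hcase]
      rw [show n - 3 - (n - 3 - w (n - 2)) = q.1 by rw [hwval]; omega,
        show n - 3 - w (n - 2) = q.2 by rw [hwval]; omega,
        show n - 2 - q.2 = q.1 + 1 by omega]
    have hP3 : ∀ u ∈ L' ++ [r], SpecialParams n u.1 u.2 := by
      intro u hu
      rcases List.mem_append.mp hu with h | h
      · exact sp_mono (by omega) (hP' u h)
      · rw [List.mem_singleton.mp h]
        refine ⟨?_, ?_, ?_⟩ <;> simp only [hr] <;> omega
    have hd3 : (L' ++ [r]).Pairwise Distant := by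
      rw [List.pairwise_append]
      refine ⟨hd', List.pairwise_singleton _ _, ?_⟩
      intro u hu r' hr'
      rw [List.mem_singleton.mp hr']
      have h1 := hu2 u hu
      have h2 := sp_arith (hP' u hu)
      rw [distant_arith]
      simp only [hr]
      omega
    have hK : IsKostant n (extendK n w) := ⟨L' ++ [r], hP3, hd3, hext⟩
    have hrmove : sigmaPerm r.1 r.2 n = n - (q.2 + 2) := by
      rw [sigmaPerm_apply r.1 r.2 (by simp only [hr]; omega)]
      simp only [hr]
      split_ifs <;> omega
    have hvaln : extendK n w n = n - (q.2 + 2) := by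
      rw [hext, prod_apply_mem (pairwise_disjoint_map hP3 hd3)
        (List.mem_map.mpr ⟨r, by simp, rfl⟩) (by rw [hrmove]; omega), hrmove]
    refine ⟨hK, by rw [hvaln]; omega, ?_, ?_⟩
    · rw [hext, ncard_supp _ hP3 hd3, hwcard,
        (hperm.map fun u => 2 * (u.2 + 1)).sum_eq, List.map_append, List.sum_append]
      simp only [List.map_cons, List.map_nil, List.sum_cons, List.sum_nil, hr]
      omega
    · rw [shrink, if_neg (by rw [hvaln]; omega)]
      rw [show n - 1 - (n - 1 - extendK n w n) = q.1 + 1 by rw [hvaln]; omega,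
        show n - 1 - extendK n w n = q.2 + 1 by rw [hvaln]; omega,
        show n - 2 - (q.2 + 1) = q.1 by omega, show q.2 + 1 - 1 = q.2 by omega]
      rw [extendK, if_neg hcase]
      rw [show n - 3 - (n - 3 - w (n - 2)) = q.1 by rw [hwval]; omega,
        show n - 3 - w (n - 2) = q.2 by rw [hwval]; omega,
        show n - 2 - q.2 = q.1 + 1 by omega]
      exact cancel2 (sigmaPerm_invol _ _ (by omega)) (sigmaPerm_invol _ _ (by omega))

/-- The recursion `ki_n^a = ki_{n-1}^a + ki_{n-2}^{a-1}` for the counts of Kostant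
involutions with a given number of transpositions. -/
theorem ki_recursion (n a : ℕ) (hn : 3 ≤ n) (ha1 : 1 ≤ a) (ha2 : a ≤ n / 2) :
    ki n a = ki (n - 1) a + ki (n - 2) (a - 1) := by

  classical
  set S := {w : Equiv.Perm ℕ | IsKostant n w ∧ Set.ncard {k : ℕ | w k ≠ k} = 2 * a} with hS
  set C := {w : Equiv.Perm ℕ | IsKostant (n - 2) w ∧ Set.ncard {k : ℕ | w k ≠ k} = 2 * (a - 1)}
    with hC
  have hfinS : S.Finite := (finite_small_supp n).subset (fun w hw => kostant_supp hw.1)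
  set A := S ∩ {w : Equiv.Perm ℕ | w n = n} with hA
  set B := S ∩ {w : Equiv.Perm ℕ | w n ≠ n} with hB
  have hsplit : S = A ∪ B := by
    ext w
    simp only [hA, hB, Set.mem_union, Set.mem_inter_iff, Set.mem_setOf_eq]
    tauto
  have hdisjAB : Disjoint A B := by
    rw [Set.disjoint_left]
    rintro w ⟨_, h1⟩ ⟨_, h2⟩
    exact h2 h1
  have hcard : S.ncard = A.ncard + B.ncard := by
    rw [hsplit]
    exact Set.ncard_union_eq hdisjAB (hfinS.subset Set.inter_subset_left)
      (hfinS.subset Set.inter_subset_left)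
  have hAeq : A = {w : Equiv.Perm ℕ | IsKostant (n - 1) w ∧ Set.ncard {k : ℕ | w k ≠ k} = 2 * a} := by
    ext w
    simp only [hA, hS, Set.mem_inter_iff, Set.mem_setOf_eq]
    have := isKostant_pred_iff hn w
    tauto
  have hBij : Set.BijOn (shrink n) B C := by
    refine ⟨?_, ?_, ?_⟩
    · rintro w ⟨⟨hK, hc⟩, hwn⟩
      obtain ⟨k1, k2, _⟩ := shrink_spec hn hK hwn
      exact ⟨k1, by omega⟩
    · rintro w1 ⟨⟨hK1, _⟩, hn1⟩ w2 ⟨⟨hK2, _⟩, hn2⟩ heq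
      have e1 := (shrink_spec hn hK1 hn1).2.2
      have e2 := (shrink_spec hn hK2 hn2).2.2
      rw [← e1, heq, e2]
    · rintro w' ⟨hK', hc'⟩
      obtain ⟨k1, k2, k3, k4⟩ := extendK_spec hn hK'
      exact ⟨extendK n w', ⟨⟨k1, by omega⟩, k2⟩, k4⟩
  have hBC : B.ncard = C.ncard := by
    rw [← hBij.image_eq, Set.ncard_image_of_injOn hBij.injOn]
  have h1 : ki n a = S.ncard := rfl
  have h2 : ki (n - 1) a = A.ncard := by rw [hAeq]; rfl
  have h3 : ki (n - 2) (a - 1) = C.ncard := rfl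
  rw [h1, h2, h3, hcard, hBC]
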